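/- Let u be an admissible function and λ ∈ ℝ such that the eigenvalue relation a_u(u, w) = λ (u, w)_{L²} holds for every admissible function w. Then the purely imaginary phase direction iu satisfies ⟨E''(u)(iu), w⟩ = λ (iu, w)_{L²} for every admissible function w; that is, iu lies in the kernel of the linearized operator E''(u) − λ𝓘 in the weak sense. -/

import Mathlib

open MeasureTheory Complex

noncomputable section

abbrev Pt (d : ℕ) := EuclideanSpace ℝ (Fin d)

/-- Admissible functions: C¹ functions with compact support contained in `𝒟`. -/
def Admissible (d : ℕ) (𝒟 : Set (Pt d)) (w : Pt d → ℂ) : Prop :=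
  ContDiff ℝ 1 w ∧ HasCompactSupport w ∧ tsupport w ⊆ 𝒟

/-- The first coordinate `x₁`. -/
def xc1 (d : ℕ) (hd : 2 ≤ d) (x : Pt d) : ℝ := x ⟨0, by omega⟩

/-- The second coordinate `x₂`. -/
def xc2 (d : ℕ) (hd : 2 ≤ d) (x : Pt d) : ℝ := x ⟨1, by omega⟩

/-- The divergence-free vector field `R(x) = (x₂, −x₁)` (resp. `(x₂, −x₁, 0)` if `d = 3`). -/
def Rvec (d : ℕ) (hd : 2 ≤ d) (x : Pt d) (j : Fin d) : ℝ :=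
  if (j : ℕ) = 0 then xc2 d hd x else if (j : ℕ) = 1 then - xc1 d hd x else 0

/-- The `j`-th partial derivative of `w` at `x`. -/
def pd (d : ℕ) (w : Pt d → ℂ) (x : Pt d) (j : Fin d) : ℂ :=
  fderiv ℝ w x (EuclideanSpace.single j (1 : ℝ))

/-- The covariant gradient `∇_R w = ∇w + i (Ω/2) w R`. -/
def covGrad (d : ℕ) (hd : 2 ≤ d) (Ω : ℝ) (w : Pt d → ℂ) (x : Pt d) (j : Fin d) : ℂ :=
  pd d w x j + Complex.I * ((Ω / 2 : ℝ) : ℂ) * w x * ((Rvec d hd x j : ℝ) : ℂ)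

/-- The modified potential `V_R(x) = V(x) − (Ω²/4)(x₁² + x₂²)`. -/
def VR (d : ℕ) (hd : 2 ≤ d) (V : Pt d → ℝ) (Ω : ℝ) (x : Pt d) : ℝ :=
  V x - (Ω ^ 2 / 4) * ((xc1 d hd x) ^ 2 + (xc2 d hd x) ^ 2)

/-- The bilinear form `a_u(v,w) = Re ∫ (∇_R v ⬝ conj ∇_R w + (V_R + β|u|²) v conj w)`. -/
def aForm (d : ℕ) (hd : 2 ≤ d) (𝒟 : Set (Pt d)) (V : Pt d → ℝ) (Ω β : ℝ)
    (u v w : Pt d → ℂ) : ℝ :=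
  (∫ x in 𝒟, ((∑ j : Fin d, covGrad d hd Ω v x j * (starRingEnd ℂ) (covGrad d hd Ω w x j))
      + ((VR d hd V Ω x + β * ‖u x‖ ^ 2 : ℝ) : ℂ) * v x * (starRingEnd ℂ) (w x))).re

/-- The real `L²` inner product `(v,w)_{L²} = Re ∫ v conj w`. -/
def l2ip (d : ℕ) (𝒟 : Set (Pt d)) (v w : Pt d → ℂ) : ℝ :=
  (∫ x in 𝒟, v x * (starRingEnd ℂ) (w x)).re

/-- The angular momentum term `𝓛₃ w = −i (x₁ ∂w/∂x₂ − x₂ ∂w/∂x₁)`. -/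
def L3op (d : ℕ) (hd : 2 ≤ d) (w : Pt d → ℂ) (x : Pt d) : ℂ :=
  - Complex.I * (((xc1 d hd x : ℝ) : ℂ) * pd d w x ⟨1, by omega⟩
      - ((xc2 d hd x : ℝ) : ℂ) * pd d w x ⟨0, by omega⟩)

/-- The Gross–Pitaevskii energy functional. -/
def energy (d : ℕ) (hd : 2 ≤ d) (𝒟 : Set (Pt d)) (V : Pt d → ℝ) (Ω β : ℝ)
    (w : Pt d → ℂ) : ℝ :=
  (1 / 2) * ∫ x in 𝒟, ((∑ j : Fin d, ‖pd d w x j‖ ^ 2) + V x * ‖w x‖ ^ 2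
      - Ω * ((starRingEnd ℂ) (w x) * L3op d hd w x).re + (β / 2) * ‖w x‖ ^ 4)

/-- The squared `H¹`-norm `∫ (|∇w|² + |w|²)`. -/
def h1normSq (d : ℕ) (𝒟 : Set (Pt d)) (w : Pt d → ℂ) : ℝ :=
  ∫ x in 𝒟, ((∑ j : Fin d, ‖pd d w x j‖ ^ 2) + ‖w x‖ ^ 2)

/-- The second Fréchet derivative form
`⟨E''(u)v, w⟩ = a_u(v,w) + 2β Re ∫ Re(u conj v) u conj w`. -/
def Epp (d : ℕ) (hd : 2 ≤ d) (𝒟 : Set (Pt d)) (V : Pt d → ℝ) (Ω β : ℝ)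
    (u v w : Pt d → ℂ) : ℝ :=
  aForm d hd 𝒟 V Ω β u v w
    + 2 * β * (∫ x in 𝒟, (((u x * (starRingEnd ℂ) (v x)).re : ℝ) : ℂ)
        * u x * (starRingEnd ℂ) (w x)).re

/-- **phase direction in the kernel of the linearization.** If the admissible
function `u` with `λ ∈ ℝ` satisfies the eigenvalue relation `a_u(u,w) = λ(u,w)_{L²}` for
every admissible `w`, then `⟨E''(u)(iu), w⟩ = λ(iu, w)_{L²}` for every admissible `w`;
that is, `iu` lies in the kernel of `E''(u) − λ𝓘` in the weak sense. -/
theorem stmt13 (d : ℕ) (hd23 : d = 2 ∨ d = 3) (hd : 2 ≤ d)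
    (𝒟 : Set (Pt d)) (h𝒟open : IsOpen 𝒟) (h𝒟bdd : Bornology.IsBounded 𝒟)
    (V : Pt d → ℝ) (hVmeas : Measurable V) (hVbdd : ∃ C : ℝ, ∀ x, V x ≤ C)
    (hVnonneg : ∀ x, 0 ≤ V x)
    (β Ω : ℝ) (hβ : 0 ≤ β)
    (u : Pt d → ℂ) (hu : Admissible d 𝒟 u)
    (lam : ℝ)
    (heig : ∀ w : Pt d → ℂ, Admissible d 𝒟 w →
      aForm d hd 𝒟 V Ω β u u w = lam * l2ip d 𝒟 u w) :
    ∀ w : Pt d → ℂ, Admissible d 𝒟 w →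
      Epp d hd 𝒟 V Ω β u (fun x => Complex.I * u x) w
        = lam * l2ip d 𝒟 (fun x => Complex.I * u x) w := by
  intro w hw
  -- I * w is admissible
  have hw' : Admissible d 𝒟 (fun x => Complex.I * w x) := by
    refine ⟨contDiff_const.mul hw.1, ?_, ?_⟩
    · exact hw.2.1.mul_left
    · exact (closure_mono (Function.support_mul_subset_right _ _)).trans hw.2.2
  -- partial derivatives of I * f
  have hpd : ∀ (f : Pt d → ℂ), ContDiff ℝ 1 f → ∀ (x : Pt d) (j : Fin d),
      pd d (fun y => Complex.I * f y) x j = Complex.I * pd d f x j := by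
    intro f hf x j
    unfold pd
    rw [fderiv_const_mul (hf.differentiable one_ne_zero x) Complex.I]
    simp
  have hcg : ∀ (f : Pt d → ℂ), ContDiff ℝ 1 f → ∀ (x : Pt d) (j : Fin d),
      covGrad d hd Ω (fun y => Complex.I * f y) x j = Complex.I * covGrad d hd Ω f x j := by
    intro f hf x j
    unfold covGrad
    rw [hpd f hf x j]
    ring
  -- aForm with iu in second slot equals minus aForm with Iw in third slot
  have h1 : aForm d hd 𝒟 V Ω β u (fun x => Complex.I * u x) w
      = - aForm d hd 𝒟 V Ω β u u (fun x => Complex.I * w x) := by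
    unfold aForm
    rw [← Complex.neg_re, ← integral_neg]
    congr 1
    refine integral_congr_ae (Filter.Eventually.of_forall fun x => ?_)
    simp only [hcg u hu.1, hcg w hw.1, map_mul, Complex.conj_I]
    rw [neg_add, ← Finset.sum_neg_distrib]
    refine congrArg₂ (· + ·) (Finset.sum_congr rfl fun j _ => by ring) (by ring)
  -- l2ip with iu in first slot equals minus l2ip with Iw in second slot
  have h2 : l2ip d 𝒟 (fun x => Complex.I * u x) w
      = - l2ip d 𝒟 u (fun x => Complex.I * w x) := by
    unfold l2ip
    rw [← Complex.neg_re, ← integral_neg]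
    congr 1
    refine integral_congr_ae (Filter.Eventually.of_forall fun x => ?_)
    simp only [map_mul, Complex.conj_I]
    ring
  -- the nonlinear term vanishes
  have h3 : (∫ x in 𝒟, (((u x * (starRingEnd ℂ) (Complex.I * u x)).re : ℝ) : ℂ)
      * u x * (starRingEnd ℂ) (w x)).re = 0 := by
    have : ∀ x : Pt d, (((u x * (starRingEnd ℂ) (Complex.I * u x)).re : ℝ) : ℂ)
        * u x * (starRingEnd ℂ) (w x) = 0 := by
      intro x
      have : (u x * (starRingEnd ℂ) (Complex.I * u x)).re = 0 := by
        simp [Complex.mul_re, Complex.mul_im, Complex.conj_re, Complex.conj_im,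
          Complex.I_re, Complex.I_im]
        ring
      rw [this]
      simp
    rw [integral_congr_ae (Filter.Eventually.of_forall this)]
    simp
  unfold Epp
  rw [h1, h2, h3, heig _ hw']
  ring
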